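/- For any fixed real number r0 > 0, the series I_1(m, r0) tends to 0 as the integer m tends to infinity, where I_1(m, r0) = ∑_{k=1}^∞ ((−1)^k · Γ(m+3/2) · √(2m+3) / (k! · Γ(m+k+3/2))) · (r0/2)^{2k} · r0^{−3/2}. -/

import Mathlib

open Real Filter Topology

/-- `I₁(m, r₀)` from the paper: the series
`∑_{k=1}^∞ ((−1)^k Γ(m+3/2) √(2m+3) / (k! Γ(m+k+3/2))) (r₀/2)^{2k} r₀^{−3/2}`. -/
noncomputable def I1 (m : ℕ) (r0 : ℝ) : ℝ :=
  ∑' k : ℕ,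
    ((-1 : ℝ) ^ (k + 1) * Real.Gamma ((m : ℝ) + 3 / 2) * Real.sqrt (2 * (m : ℝ) + 3) /
        ((Nat.factorial (k + 1) : ℝ) * Real.Gamma ((m : ℝ) + (k + 1 : ℕ) + 3 / 2))) *
      (r0 / 2) ^ (2 * (k + 1)) * r0 ^ (-(3 / 2) : ℝ)

lemma gamma_pow_le {x : ℝ} (hx : 0 < x) (n : ℕ) :
    x ^ n * Real.Gamma x ≤ Real.Gamma (x + n) := by
  induction n with
  | zero => simp
  | succ n ih =>
    have hxn : (0:ℝ) < x + n := by positivity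
    have h1 : Real.Gamma (x + (n + 1 : ℕ)) = (x + n) * Real.Gamma (x + n) := by
      push_cast
      rw [show x + ((n : ℝ) + 1) = (x + n) + 1 by ring, Real.Gamma_add_one (ne_of_gt hxn)]
    rw [h1]
    calc x ^ (n+1) * Real.Gamma x = x * (x ^ n * Real.Gamma x) := by ring
      _ ≤ x * Real.Gamma (x + n) := mul_le_mul_of_nonneg_left ih hx.le
      _ ≤ (x + n) * Real.Gamma (x + n) :=
          mul_le_mul_of_nonneg_right (by linarith) (Real.Gamma_pos_of_pos hxn).le

set_option maxHeartbeats 800000 in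
theorem I1_tendsto_zero (r0 : ℝ) (hr0 : 0 < r0) :
    Tendsto (fun m : ℕ => I1 m r0) atTop (𝓝 0) := by
  set C : ℝ := r0 ^ (-(3 / 2) : ℝ) * (r0 / 2) ^ 2 * 2 with hC
  -- bounding function
  set g : ℕ → ℝ := fun m => C * (Real.sqrt (2 * (m : ℝ) + 3) / ((m : ℝ) + 3 / 2)) with hg
  have hgzero : Tendsto g atTop (𝓝 0) := by
    have hq : ∀ m : ℕ, Real.sqrt (2 * (m : ℝ) + 3) / ((m : ℝ) + 3 / 2)
        = 2 / Real.sqrt (2 * (m : ℝ) + 3) := by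
      intro m
      have h0 : (0:ℝ) ≤ 2 * (m : ℝ) + 3 := by positivity
      have hs : 0 < Real.sqrt (2 * (m : ℝ) + 3) := Real.sqrt_pos.mpr (by positivity)
      rw [div_eq_div_iff (by positivity) hs.ne', Real.mul_self_sqrt h0]
      ring
    have hsq : Tendsto (fun m : ℕ => Real.sqrt (2 * (m : ℝ) + 3)) atTop atTop := by
      have hbase : Tendsto (fun m : ℕ => 2 * (m : ℝ) + 3) atTop atTop := by
        apply Filter.tendsto_atTop_add_const_right
        exact (tendsto_natCast_atTop_atTop (R := ℝ)).const_mul_atTop two_pos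
      have := (tendsto_rpow_atTop (by norm_num : (0:ℝ) < 1/2)).comp hbase
      refine this.congr fun m => ?_
      simp [Function.comp, Real.sqrt_eq_rpow]
    have h2 : Tendsto (fun m : ℕ => 2 / Real.sqrt (2 * (m : ℝ) + 3)) atTop (𝓝 0) :=
      tendsto_const_nhds.div_atTop hsq
    have : Tendsto (fun m : ℕ => Real.sqrt (2 * (m : ℝ) + 3) / ((m : ℝ) + 3 / 2))
        atTop (𝓝 0) := h2.congr fun m => (hq m).symm
    simpa using this.const_mul C
  apply squeeze_zero_norm' _ hgzero
  filter_upwards [eventually_ge_atTop ⌈2 * (r0 / 2) ^ 2⌉₊] with m hm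
  -- notation
  set X : ℝ := (m : ℝ) + 3 / 2 with hX
  have hXpos : 0 < X := by positivity
  set xm : ℝ := (r0 / 2) ^ 2 / X with hxm
  have hxm0 : 0 ≤ xm := by positivity
  have hxm2 : xm ≤ 1 / 2 := by
    rw [hxm, div_le_div_iff₀ hXpos two_pos]
    have : (2 * (r0 / 2) ^ 2 : ℝ) ≤ (m : ℝ) := le_trans (Nat.le_ceil _) (by exact_mod_cast hm)
    rw [hX]; linarith
  have hxm1 : xm < 1 := by linarith
  set B : ℝ := Real.sqrt (2 * (m : ℝ) + 3) * r0 ^ (-(3 / 2) : ℝ) with hB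
  have hB0 : 0 ≤ B := by positivity
  set f : ℕ → ℝ := fun k =>
    ((-1 : ℝ) ^ (k + 1) * Real.Gamma ((m : ℝ) + 3 / 2) * Real.sqrt (2 * (m : ℝ) + 3) /
        ((Nat.factorial (k + 1) : ℝ) * Real.Gamma ((m : ℝ) + (k + 1 : ℕ) + 3 / 2))) *
      (r0 / 2) ^ (2 * (k + 1)) * r0 ^ (-(3 / 2) : ℝ) with hf
  have key : ∀ k : ℕ, |f k| ≤ B * xm ^ (k + 1) := by
    intro k
    have hGX : 0 < Real.Gamma X := Real.Gamma_pos_of_pos hXpos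
    have hargeq : (m : ℝ) + ((k : ℕ) + 1 : ℕ) + 3 / 2 = X + (k + 1 : ℕ) := by
      push_cast; rw [hX]; ring
    have hGXk : 0 < Real.Gamma (X + (k + 1 : ℕ)) :=
      Real.Gamma_pos_of_pos (by positivity)
    have hfac : (0:ℝ) < (Nat.factorial (k + 1) : ℝ) := by positivity
    set c : ℝ := Real.Gamma X * Real.sqrt (2 * (m : ℝ) + 3) /
        ((Nat.factorial (k + 1) : ℝ) * Real.Gamma (X + (k + 1 : ℕ))) *
        (r0 / 2) ^ (2 * (k + 1)) * r0 ^ (-(3 / 2) : ℝ) with hc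
    have hc0 : 0 ≤ c := by
      rw [hc]
      have h1 : (0:ℝ) ≤ Real.Gamma X * Real.sqrt (2 * (m : ℝ) + 3) :=
        mul_nonneg hGX.le (Real.sqrt_nonneg _)
      have h2 : (0:ℝ) ≤ (Nat.factorial (k + 1) : ℝ) * Real.Gamma (X + (k + 1 : ℕ)) :=
        mul_nonneg hfac.le hGXk.le
      exact mul_nonneg (mul_nonneg (div_nonneg h1 h2) (by positivity))
        (Real.rpow_nonneg hr0.le _)
    have hfc : f k = (-1 : ℝ) ^ (k + 1) * c := by
      rw [hf, hc]
      simp only [hargeq, hX]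
      ring
    have habs : |f k| = c := by
      rw [hfc, abs_mul, abs_pow, abs_neg, abs_one, one_pow, one_mul, abs_of_nonneg hc0]
    rw [habs, hc]
    have hGquot : Real.Gamma X / Real.Gamma (X + (k + 1 : ℕ)) ≤ (1 / X) ^ (k + 1) := by
      rw [div_le_iff₀ hGXk, one_div, inv_pow, ← div_le_iff₀' (by positivity), div_eq_mul_inv,
        inv_inv]
      rw [mul_comm]
      exact gamma_pow_le hXpos (k + 1)
    have hfacinv : ((Nat.factorial (k + 1) : ℝ))⁻¹ ≤ 1 := by
      rw [inv_le_one_iff₀]; right; exact_mod_cast Nat.one_le_iff_ne_zero.mpr (Nat.factorial_ne_zero _)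
    calc Real.Gamma X * Real.sqrt (2 * (m : ℝ) + 3) /
        ((Nat.factorial (k + 1) : ℝ) * Real.Gamma (X + (k + 1 : ℕ))) *
        (r0 / 2) ^ (2 * (k + 1)) * r0 ^ (-(3 / 2) : ℝ)
        = B * ((((r0 / 2) ^ 2) ^ (k + 1)) *
            ((Real.Gamma X / Real.Gamma (X + (k + 1 : ℕ))) *
              ((Nat.factorial (k + 1) : ℝ))⁻¹)) := by
          rw [hB, ← pow_mul]
          field_simp
      _ ≤ B * ((((r0 / 2) ^ 2) ^ (k + 1)) * ((1 / X) ^ (k + 1) * 1)) := by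
          apply mul_le_mul_of_nonneg_left _ hB0
          apply mul_le_mul_of_nonneg_left _ (by positivity)
          exact mul_le_mul hGquot hfacinv (by positivity) (by positivity)
      _ = B * xm ^ (k + 1) := by
          rw [mul_one, ← mul_pow, hxm]; ring_nf
  -- summability
  have hgeom : Summable (fun k : ℕ => B * xm ^ (k + 1)) := by
    refine ((summable_geometric_of_lt_one hxm0 hxm1).mul_left (B * xm)).congr fun k => ?_
    rw [pow_succ]
    ring
  have hfs : Summable fun k => |f k| :=
    Summable.of_nonneg_of_le (fun k => abs_nonneg _) key hgeom
  have hfsum : Summable f := hfs.of_abs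
  have hfs' : Summable fun k => ‖f k‖ := by
    simpa only [Real.norm_eq_abs] using hfs
  have hI : I1 m r0 = ∑' k, f k := rfl
  have h1 : ‖I1 m r0‖ ≤ ∑' k, |f k| := by
    rw [hI]
    calc ‖∑' k, f k‖ ≤ ∑' k, ‖f k‖ := norm_tsum_le_tsum_norm hfs'
      _ = ∑' k, |f k| := by simp only [Real.norm_eq_abs]
  have h2 : ∑' k, |f k| ≤ ∑' k, B * xm ^ (k + 1) := Summable.tsum_le_tsum key hfs hgeom
  have h3 : ∑' k : ℕ, B * xm ^ (k + 1) = B * xm * (1 - xm)⁻¹ := by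
    have : ∀ k : ℕ, B * xm ^ (k + 1) = (B * xm) * xm ^ k := by
      intro k; rw [pow_succ]; ring
    rw [tsum_congr this, tsum_mul_left, tsum_geometric_of_lt_one hxm0 hxm1]
  have h4 : B * xm * (1 - xm)⁻¹ ≤ B * xm * 2 := by
    apply mul_le_mul_of_nonneg_left _ (by positivity)
    rw [inv_le_iff_one_le_mul₀ (by linarith)]
    linarith
  have h5 : B * xm * 2 = g m := by
    rw [hB, hxm, hg, hC, hX]; ring
  calc ‖I1 m r0‖ ≤ ∑' k, |f k| := h1
    _ ≤ ∑' k, B * xm ^ (k + 1) := h2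
    _ = B * xm * (1 - xm)⁻¹ := h3
    _ ≤ B * xm * 2 := h4
    _ = g m := h5
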